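/- Let V be a 4-dimensional real inner product space with nondegenerate metric g and pseudo-orthonormal basis e₁,...,e₄ with εᵢ = g(eᵢ,eᵢ). Let R be a curvature-type tensor with Ricci tensor S(Z,U) = Σᵢ εᵢ R(eᵢ, Z, U, eᵢ) satisfying S = (r/4)g with r the scalar curvature, let α, ρ ∈ V with A(Y) = g(Y,α), ω(Y) = g(Y,ρ), g(ρ,ρ) = -1, and suppose R(Y,Z,U,α) + ω(Y)S(Z,U) - ω(Z)S(Y,U) + R(Y,Z,U,ρ) = 0 for all Y,Z,U. Then r·[g(α,ρ) - 4] = 0; hence either r = 0 or g(α,ρ) = 4. -/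

import Mathlib

/-- For a weakly symmetric perfect fluid Kähler space-time, either the
scalar curvature vanishes or the associated vector fields satisfy
`g(α,ρ) = 4`; algebraically, `r (g(α,ρ) - 4) = 0`. -/
theorem weakly_symmetric_scalar_or_inner
    {V : Type*} [AddCommGroup V] [Module ℝ V]
    (g S : V →ₗ[ℝ] V →ₗ[ℝ] ℝ)
    (hgsymm : ∀ X Y, g X Y = g Y X)
    (hgnd : ∀ X, (∀ Y, g X Y = 0) → X = 0)
    (b : Module.Basis (Fin 4) ℝ V) (ε : Fin 4 → ℝ)
    (hε : ∀ i, ε i = 1 ∨ ε i = -1)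
    (hortho : ∀ i j, g (b i) (b j) = if i = j then ε i else 0)
    (R : V → V → V → V → ℝ)
    (hR1 : ∀ X Y Z T, R X Y Z T = -R Y X Z T)
    (hR2 : ∀ X Y Z T, R X Y Z T = -R X Y T Z)
    (hR3 : ∀ X Y Z T, R X Y Z T = R Z T X Y)
    (hRic : ∀ Z U, S Z U = ∑ i, ε i * R (b i) Z U (b i))
    (r : ℝ) (hr : r = ∑ i, ε i * S (b i) (b i))
    (hS : ∀ X Y, S X Y = r / 4 * g X Y)
    (α ρ : V) (hρ : g ρ ρ = -1)
    (hkey : ∀ Y Z U, R Y Z U α + g Y ρ * S Z U - g Z ρ * S Y U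
        + R Y Z U ρ = 0) :
    r * (g α ρ - 4) = 0 := by

  have hε2 : ∀ i, ε i * ε i = 1 := by
    intro i; rcases hε i with h | h <;> rw [h] <;> norm_num
  have hexp : ∀ w Y : V, (∑ i, ε i * g (b i) w * g Y (b i)) = g Y w := by
    intro w Y
    have hw : ∀ j, g (b j) w = b.repr w j * ε j := by
      intro j
      conv_lhs => rw [← b.sum_repr w]
      rw [map_sum]
      simp only [map_smul, smul_eq_mul, hortho]
      rw [Finset.sum_eq_single j]
      · simp
      · intro i _ hij; simp [(Ne.symm hij : j ≠ i)]
      · simp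
    have hYw : g Y w = ∑ i, b.repr w i * g Y (b i) := by
      conv_lhs => rw [← b.sum_repr w]
      rw [map_sum]
      simp [map_smul]
    rw [hYw]
    apply Finset.sum_congr rfl
    intro i _
    rw [hw i]
    linear_combination (b.repr w i * g Y (b i)) * hε2 i
  have hc : ∀ Y : V, r / 4 * g α Y + r * g Y ρ = 0 := by
    intro Y
    have h0 : (∑ i, ε i * (R Y (b i) (b i) α + g Y ρ * S (b i) (b i)
        - g (b i) ρ * S Y (b i) + R Y (b i) (b i) ρ)) = 0 := by
      apply Finset.sum_eq_zero
      intro i _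
      rw [hkey Y (b i) (b i)]; ring
    have hterm : ∀ i : Fin 4, ε i * (R Y (b i) (b i) α + g Y ρ * S (b i) (b i)
        - g (b i) ρ * S Y (b i) + R Y (b i) (b i) ρ)
        = ε i * R (b i) α Y (b i) + g Y ρ * (ε i * S (b i) (b i))
          - (ε i * g (b i) ρ * g Y (b i)) * (r / 4)
          + ε i * R (b i) ρ Y (b i) := by
      intro i
      rw [hR3 Y (b i) (b i) α, hR3 Y (b i) (b i) ρ, hS Y (b i)]; ring
    rw [Finset.sum_congr rfl (fun i _ => hterm i), Finset.sum_add_distrib,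
      Finset.sum_sub_distrib, Finset.sum_add_distrib, ← Finset.mul_sum,
      ← Finset.sum_mul, ← hRic α Y, ← hRic ρ Y, hexp ρ Y, ← hr, hS α Y,
      hS ρ Y, hgsymm ρ Y] at h0
    nlinarith [h0]
  have h := hc ρ
  rw [hρ] at h
  linear_combination 4 * h
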